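/- Every chordal graph is perfect: if G = (V,E) is a graph containing no induced cycle of length at least 4, then χ(G_X) = ω(G_X) for every finite X ⊆ V. -/

import Mathlib

open Cardinal SimpleGraph

universe u

/-- A set of vertices is an anticlique (independent set) if its elements are
pairwise non-adjacent. -/
def IsAnticlique {V : Type u} (G : SimpleGraph V) (s : Set V) : Prop :=
  s.Pairwise fun u v => ¬ G.Adj u v

/-- The clique number: the supremum of the cardinalities of cliques. -/
noncomputable def cardCliqueNum {V : Type u} (G : SimpleGraph V) : Cardinal.{u} :=
  ⨆ s : {s : Set V // G.IsClique s}, #s.1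

/-- The chromatic number: the smallest cardinality of a cover of the vertex set
by anticliques. -/
noncomputable def cardChromNum {V : Type u} (G : SimpleGraph V) : Cardinal.{u} :=
  sInf {κ | ∃ P : Set (Set V), (∀ s ∈ P, IsAnticlique G s) ∧ ⋃₀ P = Set.univ ∧ #P = κ}

/-- A graph is chordal if it contains no induced cycle of length at least `4`. -/
def Chordal {V : Type u} (G : SimpleGraph V) : Prop :=
  ∀ n : ℕ, 4 ≤ n → IsEmpty (cycleGraph n ↪g G)


namespace CGP

variable {W : Type u} (H : SimpleGraph W)

/-- A walk of length `n` from `x` to `y` staying inside `A`, given as a function `ℕ → W`. -/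
def Pth (A : Set W) (x y : W) (n : ℕ) (f : ℕ → W) : Prop :=
  f 0 = x ∧ f n = y ∧ (∀ i ≤ n, f i ∈ A) ∧ ∀ i < n, H.Adj (f i) (f (i + 1))

/-- `y` is reachable from `x` by a walk inside `A`. -/
def Reach (A : Set W) (x y : W) : Prop := ∃ n f, Pth H A x y n f

variable {H}

lemma Reach.refl {A : Set W} {x : W} (hx : x ∈ A) : Reach H A x x :=
  ⟨0, fun _ => x, rfl, rfl, fun _ _ => hx, fun i h => absurd h (Nat.not_lt_zero i)⟩

lemma Reach.single {A : Set W} {x y : W} (hx : x ∈ A) (hy : y ∈ A) (h : H.Adj x y) :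
    Reach H A x y := by
  refine ⟨1, fun i => if i = 0 then x else y, by simp, by simp, ?_, ?_⟩
  · intro i _; by_cases h0 : i = 0 <;> simp [h0, hx, hy]
  · intro i hi; interval_cases i; simpa using h

lemma Reach.symm {A : Set W} {x y : W} (h : Reach H A x y) : Reach H A y x := by
  obtain ⟨n, f, h0, hn, hA, hadj⟩ := h
  refine ⟨n, fun i => f (n - i), by simp [hn], by simp [h0], ?_, ?_⟩
  · intro i _; exact hA _ (by omega)
  · intro i hi
    have := hadj (n - i - 1) (by omega)
    have e1 : n - i - 1 + 1 = n - i := by omega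
    have e2 : n - (i + 1) = n - i - 1 := by omega
    rw [e1] at this
    show H.Adj (f (n - i)) (f (n - (i+1)))
    rw [e2]
    exact this.symm

lemma Reach.trans {A : Set W} {x y z : W} (h1 : Reach H A x y) (h2 : Reach H A y z) :
    Reach H A x z := by
  obtain ⟨n, f, hf0, hfn, hfA, hfadj⟩ := h1
  obtain ⟨m, g, hg0, hgm, hgA, hgadj⟩ := h2
  refine ⟨n + m, fun i => if i ≤ n then f i else g (i - n), by simp [hf0], ?_, ?_, ?_⟩
  · by_cases hm : m = 0
    · subst hm
      simp only [Nat.add_zero, le_refl, if_pos]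
      rw [hfn, ← hg0]; exact hgm
    · have : ¬ (n + m ≤ n) := by omega
      simp only [this, if_false]
      rw [show n + m - n = m by omega]; exact hgm
  · intro i hi
    by_cases h : i ≤ n
    · simp only [h, if_true]; exact hfA i h
    · simp only [h, if_false]; exact hgA _ (by omega)
  · intro i hi
    by_cases h : i + 1 ≤ n
    · simp only [show i ≤ n by omega, h, if_true]; exact hfadj i (by omega)
    · by_cases h' : i ≤ n
      · have hin : i = n := by omega
        simp only [h, h', if_true, if_false]
        subst hin
        rw [show i + 1 - i = 1 by omega, hfn, ← hg0]
        exact hgadj 0 (by omega)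
      · simp only [h, h', if_false]
        rw [show i + 1 - n = (i - n) + 1 by omega]
        exact hgadj (i - n) (by omega)

lemma Reach.mono {A B : Set W} (hAB : A ⊆ B) {x y : W} (h : Reach H A x y) : Reach H B x y := by
  obtain ⟨n, f, h0, hn, hA, hadj⟩ := h
  exact ⟨n, f, h0, hn, fun i hi => hAB (hA i hi), hadj⟩

lemma Pth.reach_of_le {A : Set W} {x y : W} {n : ℕ} {f : ℕ → W}
    (h : Pth H A x y n f) {i : ℕ} (hi : i ≤ n) : Reach H A x (f i) := by
  obtain ⟨h0, _, hA, hadj⟩ := h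
  exact ⟨i, f, h0, rfl, fun j hj => hA j (by omega), fun j hj => hadj j (by omega)⟩

/-- Vertices reachable from `a` inside `A` are reachable by walks whose vertices are all
reachable from `a`. -/
lemma Reach.within {A : Set W} {a u : W} (h : Reach H A a u) :
    Reach H {v | Reach H A a v} a u := by
  obtain ⟨n, f, h0, hn, hA, hadj⟩ := h
  exact ⟨n, f, h0, hn, fun i hi => Pth.reach_of_le ⟨h0, hn, hA, hadj⟩ hi, hadj⟩

lemma Reach.mem_left {A : Set W} {x y : W} (h : Reach H A x y) : x ∈ A := by
  obtain ⟨n, f, h0, hn, hA, _⟩ := h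
  exact h0 ▸ hA 0 (by omega)

lemma Reach.mem_right {A : Set W} {x y : W} (h : Reach H A x y) : y ∈ A :=
  h.symm.mem_left
lemma exists_induced_path {A : Set W} {x y : W} (h : Reach H A x y) (hne : x ≠ y)
    (hna : ¬ H.Adj x y) :
    ∃ n f, 2 ≤ n ∧ Pth H A x y n f ∧
      (∀ i ≤ n, ∀ j ≤ n, f i = f j → i = j) ∧
      (∀ i j, i ≤ n → j ≤ n → i + 1 < j → ¬ H.Adj (f i) (f j)) := by
  classical
  have hex : ∃ n, ∃ f, Pth H A x y n f := h
  obtain ⟨f, hf⟩ := Nat.find_spec hex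
  set n := Nat.find hex with hn_def
  obtain ⟨hf0, hfn, hfA, hfadj⟩ := hf
  have hmin : ∀ m, m < n → ¬∃ g, Pth H A x y m g := fun m hm => Nat.find_min hex hm
  have hinj : ∀ i j, i ≤ n → j ≤ n → i < j → f i ≠ f j := by
    intro i j hi hj hij heq
    set e := j - i with he
    set g : ℕ → W := fun l => if l ≤ i then f l else f (l + e) with hg
    have hg1 : ∀ l, l ≤ i → g l = f l := fun l hl => if_pos hl
    have hg2 : ∀ l, ¬ (l ≤ i) → g l = f (l + e) := fun l hl => if_neg hl
    refine hmin (n - e) (by omega) ⟨g, ?_, ?_, ?_, ?_⟩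
    · rw [hg1 0 (by omega)]; exact hf0
    · by_cases hle : n - e ≤ i
      · have h2 : n - e = i := by omega
        rw [h2, hg1 i (le_refl i), heq, show j = n by omega]; exact hfn
      · rw [hg2 _ hle, show n - e + e = n by omega]; exact hfn
    · intro l hl
      by_cases hle : l ≤ i
      · rw [hg1 _ hle]; exact hfA l (by omega)
      · rw [hg2 _ hle]; exact hfA _ (by omega)
    · intro l hl
      by_cases h1 : l + 1 ≤ i
      · rw [hg1 _ (by omega), hg1 _ h1]; exact hfadj l (by omega)
      · by_cases h2 : l ≤ i
        · have hli : l = i := by omega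
          rw [hg1 _ h2, hg2 _ h1, hli, heq, show i + 1 + e = j + 1 by omega]
          exact hfadj j (by omega)
        · rw [hg2 _ h2, hg2 _ h1, show l + 1 + e = (l + e) + 1 by omega]
          exact hfadj (l + e) (by omega)
  have hnonadj : ∀ i j, i ≤ n → j ≤ n → i + 1 < j → ¬ H.Adj (f i) (f j) := by
    intro i j hi hj hij hadj
    set e := j - i - 1 with he
    set g : ℕ → W := fun l => if l ≤ i then f l else f (l + e) with hg
    have hg1 : ∀ l, l ≤ i → g l = f l := fun l hl => if_pos hl
    have hg2 : ∀ l, ¬ (l ≤ i) → g l = f (l + e) := fun l hl => if_neg hl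
    refine hmin (n - e) (by omega) ⟨g, ?_, ?_, ?_, ?_⟩
    · rw [hg1 0 (by omega)]; exact hf0
    · rw [hg2 _ (by omega : ¬ (n - e ≤ i)), show n - e + e = n by omega]; exact hfn
    · intro l hl
      by_cases hle : l ≤ i
      · rw [hg1 _ hle]; exact hfA l (by omega)
      · rw [hg2 _ hle]; exact hfA _ (by omega)
    · intro l hl
      by_cases h1 : l + 1 ≤ i
      · rw [hg1 _ (by omega), hg1 _ h1]; exact hfadj l (by omega)
      · by_cases h2 : l ≤ i
        · have hli : l = i := by omega
          rw [hg1 _ h2, hg2 _ h1, hli, show i + 1 + e = j by omega]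
          exact hadj
        · rw [hg2 _ h2, hg2 _ h1, show l + 1 + e = (l + e) + 1 by omega]
          exact hfadj (l + e) (by omega)
  have hn0 : n ≠ 0 := by
    intro h0; exact hne (by rw [← hf0, ← hfn, h0])
  have hn1 : n ≠ 1 := by
    intro h1
    have := hfadj 0 (by omega)
    rw [hf0, show (0 + 1 : ℕ) = n by omega, hfn] at this
    exact hna this
  refine ⟨n, f, by omega, ⟨hf0, hfn, hfA, hfadj⟩, ?_, hnonadj⟩
  intro i hi j hj heq
  rcases Nat.lt_trichotomy i j with h | h | h
  · exact absurd heq (hinj i j hi hj h)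
  · exact h
  · exact absurd heq.symm (hinj j i hj hi h)
lemma fin_sub_val_eq_one {N : ℕ} (hN : 2 ≤ N) (u v : Fin N) :
    ((u - v : Fin N) : ℕ) = 1 ↔ ((v : ℕ) + 1 = (u : ℕ) ∨ ((u : ℕ) = 0 ∧ (v : ℕ) + 1 = N)) := by
  have hu := u.isLt
  have hv := v.isLt
  rcases u with ⟨a, ha⟩; rcases v with ⟨b, hb⟩
  simp only [Fin.sub_def]
  simp only [Fin.val_mk] at *
  rcases le_or_gt b a with h | h
  · rw [show N - b + a = N + (a - b) by omega, Nat.add_mod_left,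
      Nat.mod_eq_of_lt (by omega)]
    omega
  · rw [Nat.mod_eq_of_lt (by omega)]
    omega

lemma cycleGraph_adj_iff' {N : ℕ} (hN : 4 ≤ N) (u v : Fin N) :
    (cycleGraph N).Adj u v ↔
      ((u : ℕ) + 1 = (v : ℕ) ∨ (v : ℕ) + 1 = (u : ℕ) ∨
        ((u : ℕ) = 0 ∧ (v : ℕ) + 1 = N) ∨ ((v : ℕ) = 0 ∧ (u : ℕ) + 1 = N)) := by
  rw [cycleGraph_adj', fin_sub_val_eq_one (by omega), fin_sub_val_eq_one (by omega)]
  tauto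

lemma cycle_from_paths (hH : ∀ n : ℕ, 4 ≤ n → IsEmpty (cycleGraph n ↪g H))
    {x y : W} {k m : ℕ} {p r : ℕ → W}
    (hk : 2 ≤ k) (hm : 2 ≤ m)
    (hp0 : p 0 = x) (hpk : p k = y) (hr0 : r 0 = x) (hrm : r m = y)
    (hpadj : ∀ i < k, H.Adj (p i) (p (i + 1))) (hradj : ∀ i < m, H.Adj (r i) (r (i + 1)))
    (hpinj : ∀ i ≤ k, ∀ j ≤ k, p i = p j → i = j)
    (hrinj : ∀ i ≤ m, ∀ j ≤ m, r i = r j → i = j)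
    (hpind : ∀ i j, i ≤ k → j ≤ k → i + 1 < j → ¬ H.Adj (p i) (p j))
    (hrind : ∀ i j, i ≤ m → j ≤ m → i + 1 < j → ¬ H.Adj (r i) (r j))
    (hdisj : ∀ i j, 0 < i → i < k → 0 < j → j < m → p i ≠ r j ∧ ¬ H.Adj (p i) (r j)) :
    False := by
  classical
  set N := k + m with hN
  have hN4 : 4 ≤ N := by omega
  set g : Fin N → W := fun i => if (i : ℕ) ≤ k then p i else r (N - (i : ℕ)) with hg
  have hgl : ∀ i : Fin N, (i : ℕ) ≤ k → g i = p (i : ℕ) := by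
    intro i h; rw [hg]; exact if_pos h
  have hgr : ∀ i : Fin N, ¬ ((i : ℕ) ≤ k) → g i = r (N - (i : ℕ)) := by
    intro i h; rw [hg]; exact if_neg h
  -- mixed helpers
  have mixedNe : ∀ a c, a ≤ k → 1 ≤ c → c + 1 ≤ m → p a ≠ r c := by
    intro a c ha hc1 hc2 heq
    rcases Nat.eq_zero_or_pos a with ha0 | hapos
    · subst ha0; rw [hp0, ← hr0] at heq
      have := hrinj 0 (by omega) c (by omega) heq; omega
    · rcases eq_or_lt_of_le ha with hak | hak
      · subst hak; rw [hpk, ← hrm] at heq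
        have := hrinj m (by omega) c (by omega) heq; omega
      · exact (hdisj a c hapos hak hc1 (by omega)).1 heq
  have mixedAdj : ∀ a c, a ≤ k → 1 ≤ c → c + 1 ≤ m → ¬ (a = 0 ∧ c = 1) →
      ¬ (a = k ∧ c + 1 = m) → ¬ H.Adj (p a) (r c) := by
    intro a c ha hc1 hc2 hw1 hw2 hadj
    rcases Nat.eq_zero_or_pos a with ha0 | hapos
    · subst ha0; rw [hp0, ← hr0] at hadj
      exact hrind 0 c (by omega) (by omega) (by omega) hadj
    · rcases eq_or_lt_of_le ha with hak | hak
      · subst hak; rw [hpk, ← hrm] at hadj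
        exact hrind c m (by omega) (by omega) (by omega) hadj.symm
      · exact (hdisj a c hapos hak hc1 (by omega)).2 hadj
  -- injectivity
  have ginj : Function.Injective g := by
    intro u v huv
    have hu := u.isLt; have hv := v.isLt
    apply Fin.ext
    by_cases h1 : (u : ℕ) ≤ k <;> by_cases h2 : (v : ℕ) ≤ k
    · rw [hgl u h1, hgl v h2] at huv; exact hpinj _ h1 _ h2 huv
    · exfalso
      rw [hgl u h1, hgr v h2] at huv
      exact mixedNe _ _ h1 (by omega) (by omega) huv
    · exfalso
      rw [hgr u h1, hgl v h2] at huv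
      exact mixedNe _ _ h2 (by omega) (by omega) huv.symm
    · rw [hgr u h1, hgr v h2] at huv
      have := hrinj (N - (u : ℕ)) (by omega) (N - (v : ℕ)) (by omega) huv
      omega
  -- forward adjacency
  have hsucc : ∀ u v : Fin N, (u : ℕ) + 1 = (v : ℕ) → H.Adj (g u) (g v) := by
    intro u v hab
    have hu := u.isLt; have hv := v.isLt
    by_cases h2 : (v : ℕ) ≤ k
    · rw [hgl u (by omega), hgl v h2, ← hab]
      exact hpadj _ (by omega)
    · by_cases h1 : (u : ℕ) ≤ k
      · have e1 : g u = r m := by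
          rw [hgl u h1, show (u : ℕ) = k by omega, hpk, ← hrm]
        have e2 : g v = r (m - 1) := by
          rw [hgr v h2]; congr 1; omega
        rw [e1, e2]
        have := hradj (m - 1) (by omega)
        rw [show m - 1 + 1 = m by omega] at this
        exact this.symm
      · have e1 : g u = r (N - (u : ℕ)) := hgr u h1
        have e2 : g v = r (N - (u : ℕ) - 1) := by
          rw [hgr v h2]; congr 1; omega
        rw [e1, e2]
        have := hradj (N - (u : ℕ) - 1) (by omega)
        rw [show N - (u : ℕ) - 1 + 1 = N - (u : ℕ) by omega] at this
        exact this.symm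
  have hwrap : ∀ u v : Fin N, (u : ℕ) = 0 → (v : ℕ) + 1 = N → H.Adj (g u) (g v) := by
    intro u v h0 hN1
    have e1 : g u = r 0 := by
      rw [hgl u (by omega), h0, hp0, ← hr0]
    have e2 : g v = r 1 := by
      rw [hgr v (by omega)]; congr 1; omega
    rw [e1, e2]
    have := hradj 0 (by omega)
    norm_num at this
    exact this
  -- backward: non-adjacency
  have hQ : ∀ u v : Fin N, (u : ℕ) < (v : ℕ) → (u : ℕ) + 1 ≠ (v : ℕ) →
      ¬ ((u : ℕ) = 0 ∧ (v : ℕ) + 1 = N) → ¬ H.Adj (g u) (g v) := by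
    intro u v hlt hs hw
    have hu := u.isLt; have hv := v.isLt
    by_cases h2 : (v : ℕ) ≤ k
    · rw [hgl u (by omega), hgl v h2]
      exact hpind _ _ (by omega) h2 (by omega)
    · by_cases h1 : (u : ℕ) ≤ k
      · rw [hgl u h1, hgr v h2]
        exact mixedAdj _ _ h1 (by omega) (by omega) (by omega) (by omega)
      · rw [hgr u h1, hgr v h2]
        have := hrind (N - (v : ℕ)) (N - (u : ℕ)) (by omega) (by omega) (by omega)
        exact fun h => this h.symm
  have hiff : ∀ u v : Fin N, H.Adj (g u) (g v) ↔ (cycleGraph N).Adj u v := by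
    intro u v
    constructor
    · intro h
      rw [cycleGraph_adj_iff' hN4]
      by_contra hc
      push_neg at hc
      obtain ⟨hc1, hc2, hc3, hc4⟩ := hc
      have hu := u.isLt; have hv := v.isLt
      rcases Nat.lt_trichotomy (u : ℕ) (v : ℕ) with hlt | heq | hgt
      · exact hQ u v hlt hc1 (by intro ⟨a1, a2⟩; exact hc3 a1 a2) h
      · have : u = v := Fin.ext heq
        subst this
        exact H.loopless.irrefl _ h
      · exact hQ v u hgt (fun hh => hc2 hh) (by intro ⟨a1, a2⟩; exact hc4 a1 a2) h.symm
    · intro h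
      rw [cycleGraph_adj_iff' hN4] at h
      rcases h with h | h | ⟨h1, h2⟩ | ⟨h1, h2⟩
      · exact hsucc u v h
      · exact (hsucc v u h).symm
      · exact hwrap u v h1 h2
      · exact (hwrap v u h1 h2).symm
  exact (hH N hN4).false ⟨⟨g, ginj⟩, hiff _ _⟩
/-- If `b` is reachable from `a` inside `D ∪ {x}` but not inside `D`, then `x` has a
neighbour in the `D`-component of `a`. -/
lemma exists_nbr {D : Set W} {a b x : W} (hax : a ≠ x)
    (hreach : Reach H (D ∪ {x}) a b) (hnreach : ¬ Reach H D a b) :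
    ∃ u, Reach H D a u ∧ H.Adj u x := by
  classical
  obtain ⟨n, f, h0, hn, hA, hadj⟩ := hreach
  have hex : ∃ i, i ≤ n ∧ f i = x := by
    by_contra hc
    push_neg at hc
    refine hnreach ⟨n, f, h0, hn, fun i hi => ?_, hadj⟩
    rcases hA i hi with h | h
    · exact h
    · exact absurd h (hc i hi)
  obtain ⟨hin, hix⟩ := Nat.find_spec hex
  have hi1 : 1 ≤ Nat.find hex := by
    rcases Nat.eq_zero_or_pos (Nat.find hex) with h | h
    · exfalso; apply hax; rw [← h0]; rw [h] at hix; exact hix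
    · exact h
  have hprev : ∀ j, j ≤ Nat.find hex - 1 → f j ∈ D := by
    intro j hj
    rcases hA j (by omega) with h | h
    · exact h
    · exact absurd ⟨by omega, h⟩ (Nat.find_min hex (show j < Nat.find hex by omega))
  refine ⟨f (Nat.find hex - 1), ⟨Nat.find hex - 1, f, h0, rfl, fun j hj => hprev j hj,
    fun j hj => hadj j (by omega)⟩, ?_⟩
  have := hadj (Nat.find hex - 1) (by omega)
  rw [show Nat.find hex - 1 + 1 = Nat.find hex by omega, hix] at this
  exact this

lemma no_reach_pair {a b : W} (hab : a ≠ b) (hnadj : ¬ H.Adj a b) :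
    ¬ Reach H {v | v = a ∨ v = b} a b := by
  classical
  rintro ⟨n, f, h0, hn, hA, hadj⟩
  have hex : ∃ i, i ≤ n ∧ f i = b := ⟨n, le_refl n, hn⟩
  obtain ⟨hin, hib⟩ := Nat.find_spec hex
  have hi1 : 1 ≤ Nat.find hex := by
    rcases Nat.eq_zero_or_pos (Nat.find hex) with h | h
    · rw [h, h0] at hib; exact absurd hib hab
    · exact h
  have hprev : f (Nat.find hex - 1) = a := by
    rcases hA _ (by omega : Nat.find hex - 1 ≤ n) with h | h
    · exact h
    · exact absurd ⟨by omega, h⟩ (Nat.find_min hex (by omega))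
  have := hadj (Nat.find hex - 1) (by omega)
  rw [show Nat.find hex - 1 + 1 = Nat.find hex by omega, hib, hprev] at this
  exact hnadj this

/-- A minimal separator in a chordal graph is a clique (core argument). -/
lemma sep_clique_aux (hH : ∀ n : ℕ, 4 ≤ n → IsEmpty (cycleGraph n ↪g H))
    {D : Set W} {a b x y : W}
    (hsep : ¬ Reach H D a b) (hxy : x ≠ y)
    (hux : ∃ u, Reach H D a u ∧ H.Adj u x) (huy : ∃ u, Reach H D a u ∧ H.Adj u y)
    (hvx : ∃ v, Reach H D b v ∧ H.Adj v x) (hvy : ∃ v, Reach H D b v ∧ H.Adj v y) :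
    H.Adj x y := by
  classical
  by_contra hnadj
  obtain ⟨u1, hu1, hu1x⟩ := hux
  obtain ⟨u2, hu2, hu2y⟩ := huy
  obtain ⟨v1, hv1, hv1x⟩ := hvx
  obtain ⟨v2, hv2, hv2y⟩ := hvy
  set Ca : Set W := {v | Reach H D a v} with hCa
  set Cb : Set W := {v | Reach H D b v} with hCb
  -- x and y are joined through Ca
  have hreach_a : Reach H (Ca ∪ {x, y}) x y := by
    have h1 : Reach H (Ca ∪ {x, y}) x u1 :=
      Reach.single (by right; left; rfl) (by left; exact hu1) hu1x.symm
    have h2 : Reach H Ca u1 u2 := (hu1.within.symm.trans hu2.within)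
    have h3 : Reach H (Ca ∪ {x, y}) u2 y :=
      Reach.single (by left; exact hu2) (by right; right; rfl) hu2y
    exact (h1.trans (h2.mono (by intro v hv; left; exact hv))).trans h3
  have hreach_b : Reach H (Cb ∪ {x, y}) x y := by
    have h1 : Reach H (Cb ∪ {x, y}) x v1 :=
      Reach.single (by right; left; rfl) (by left; exact hv1) hv1x.symm
    have h2 : Reach H Cb v1 v2 := (hv1.within.symm.trans hv2.within)
    have h3 : Reach H (Cb ∪ {x, y}) v2 y :=
      Reach.single (by left; exact hv2) (by right; right; rfl) hv2y
    exact (h1.trans (h2.mono (by intro v hv; left; exact hv))).trans h3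
  obtain ⟨k, p, hk, ⟨hp0, hpk, hpA, hpadj⟩, hpinj, hpind⟩ :=
    exists_induced_path hreach_a hxy hnadj
  obtain ⟨m, r, hm, ⟨hr0, hrm, hrA, hradj⟩, hrinj, hrind⟩ :=
    exists_induced_path hreach_b hxy hnadj
  have hpint : ∀ i, 0 < i → i < k → p i ∈ Ca := by
    intro i h1 h2
    rcases hpA i (by omega) with h | h
    · exact h
    · exfalso
      rcases h with h | h
    -- p i = x or p i = y contradicts injectivity
      · have := hpinj i (by omega) 0 (by omega) (by rw [hp0]; exact h)
        omega
      · have := hpinj i (by omega) k (by omega) (by rw [hpk]; exact h)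
        omega
  have hrint : ∀ i, 0 < i → i < m → r i ∈ Cb := by
    intro i h1 h2
    rcases hrA i (by omega) with h | h
    · exact h
    · exfalso
      rcases h with h | h
      · have := hrinj i (by omega) 0 (by omega) (by rw [hr0]; exact h)
        omega
      · have := hrinj i (by omega) m (by omega) (by rw [hrm]; exact h)
        omega
  have hdisj : ∀ i j, 0 < i → i < k → 0 < j → j < m → p i ≠ r j ∧ ¬ H.Adj (p i) (r j) := by
    intro i j hi1 hi2 hj1 hj2
    have hpi : Reach H D a (p i) := hpint i hi1 hi2
    have hrj : Reach H D b (r j) := hrint j hj1 hj2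
    constructor
    · intro heq
      exact hsep (hpi.trans (heq ▸ hrj).symm)
    · intro hadj
      have hrjD : r j ∈ D := hrj.mem_right
      have : Reach H D a (r j) := hpi.trans (Reach.single hpi.mem_right hrjD hadj)
      exact hsep (this.trans hrj.symm)
  exact cycle_from_paths hH hk hm hp0 hpk hr0 hrm hpadj hradj hpinj hrinj hpind hrind hdisj

/-- `v` is simplicial in `s`: it lies in `s` and its neighbours inside `s` are
pairwise adjacent. -/
def SimplIn (H : SimpleGraph W) (s : Finset W) (v : W) : Prop :=
  v ∈ s ∧ ∀ u ∈ s, ∀ w ∈ s, H.Adj v u → H.Adj v w → u ≠ w → H.Adj u w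

/-- Dichotomy: `s` is a clique or has two nonadjacent simplicial vertices. -/
def Dich (H : SimpleGraph W) (s : Finset W) : Prop :=
  (∀ u ∈ s, ∀ w ∈ s, u ≠ w → H.Adj u w) ∨
    ∃ v w, SimplIn H s v ∧ SimplIn H s w ∧ v ≠ w ∧ ¬ H.Adj v w

lemma side_simplicial (s : Finset W)
    (IH : ∀ t, t ⊂ s → t.Nonempty → Dich H t)
    {S : Finset W} (hSs : S ⊆ s)
    (hSclique : ∀ x ∈ S, ∀ y ∈ S, x ≠ y → H.Adj x y)
    {a d : W} (haD : a ∈ (↑s : Set W) \ ↑S)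
    (hds : d ∈ s) (hdS : d ∉ S) (hdCa : ¬ Reach H ((↑s : Set W) \ ↑S) a d) :
    ∃ v, Reach H ((↑s : Set W) \ ↑S) a v ∧ SimplIn H s v := by
  classical
  set D : Set W := (↑s : Set W) \ ↑S with hD
  set sa : Finset W := s.filter (fun v => Reach H D a v) ∪ S with hsa
  have hsa_sub : sa ⊆ s := Finset.union_subset (Finset.filter_subset _ _) hSs
  have hsa_mem : ∀ v, v ∈ sa ↔ (Reach H D a v ∨ v ∈ S) := by
    intro v
    rw [hsa, Finset.mem_union, Finset.mem_filter]
    constructor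
    · rintro (⟨_, h⟩ | h)
      · exact Or.inl h
      · exact Or.inr h
    · rintro (h | h)
      · exact Or.inl ⟨by have := h.mem_right; rw [hD] at this; exact this.1, h⟩
      · exact Or.inr h
  have hd_not : d ∉ sa := by
    rw [hsa_mem]
    rintro (h | h)
    · exact hdCa h
    · exact hdS h
  have hlt : sa ⊂ s := (Finset.ssubset_iff_of_subset hsa_sub).2 ⟨d, hds, hd_not⟩
  have haCa : Reach H D a a := Reach.refl haD
  have hne : sa.Nonempty := ⟨a, (hsa_mem a).2 (Or.inl haCa)⟩
  have hcap : ∀ v, Reach H D a v → ∀ u ∈ s, H.Adj v u → u ∈ sa := by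
    intro v hv u hu hadj
    rw [hsa_mem]
    by_cases huS : u ∈ S
    · exact Or.inr huS
    · left
      have huD : u ∈ D := by rw [hD]; exact ⟨hu, huS⟩
      exact hv.trans (Reach.single hv.mem_right huD hadj)
  have hlift : ∀ v, Reach H D a v → SimplIn H sa v → SimplIn H s v := by
    intro v hv ⟨hvs, hcl⟩
    refine ⟨hsa_sub hvs, fun u hu w hw hvu hvw huw => ?_⟩
    exact hcl u (hcap v hv u hu hvu) w (hcap v hv w hw hvw) hvu hvw huw
  rcases IH sa hlt hne with hcl | ⟨v1, v2, h1, h2, hne12, hnadj⟩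
  · refine ⟨a, haCa, hlift a haCa ⟨(hsa_mem a).2 (Or.inl haCa),
      fun u hu w hw _ _ huw => hcl u hu w hw huw⟩⟩
  · by_cases hv1 : v1 ∈ S
    · have hv2 : v2 ∉ S := fun h => hnadj (hSclique _ hv1 _ h hne12)
      have hv2r : Reach H D a v2 := by
        rcases (hsa_mem v2).1 h2.1 with h | h
        · exact h
        · exact absurd h hv2
      exact ⟨v2, hv2r, hlift v2 hv2r h2⟩
    · have hv1r : Reach H D a v1 := by
        rcases (hsa_mem v1).1 h1.1 with h | h
        · exact h
        · exact absurd h hv1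
      exact ⟨v1, hv1r, hlift v1 hv1r h1⟩

theorem dirac (hH : ∀ n : ℕ, 4 ≤ n → IsEmpty (cycleGraph n ↪g H)) :
    ∀ s : Finset W, s.Nonempty → Dich H s := by
  classical
  intro s
  induction s using Finset.strongInduction with
  | _ s IH =>
  intro hs
  by_cases hclique : ∀ u ∈ s, ∀ w ∈ s, u ≠ w → H.Adj u w
  · exact Or.inl hclique
  push_neg at hclique
  obtain ⟨a, has, b, hbs, hab, hnadj⟩ := hclique
  -- the trivial separator
  set T0 : Finset W := (s.erase a).erase b with hT0
  have hsep0 : ¬ Reach H (↑s \ ↑T0) a b := by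
    intro h
    refine no_reach_pair hab hnadj (h.mono ?_)
    intro v hv
    have hv1 : v ∈ s := hv.1
    have hv2 : v ∉ T0 := by simpa using hv.2
    rw [hT0, Finset.mem_erase, Finset.mem_erase] at hv2
    show v = a ∨ v = b
    tauto
  have hQ : ∃ n, ∃ T : Finset W, T ⊆ T0 ∧ ¬ Reach H (↑s \ ↑T) a b ∧ T.card = n :=
    ⟨T0.card, T0, Finset.Subset.refl _, hsep0, rfl⟩
  obtain ⟨S, hST0, hsep, hScard⟩ := Nat.find_spec hQ
  have hSmin : ∀ x ∈ S, Reach H ((↑s \ ↑S) ∪ {x}) a b := by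
    intro x hxS
    by_contra hc
    have hxs : x ∈ s := Finset.mem_of_mem_erase (Finset.mem_of_mem_erase (hST0 hxS))
    have hEq : (↑s : Set W) \ ↑(S.erase x) = (↑s \ ↑S) ∪ {x} := by
      ext v
      simp only [Finset.coe_erase, Set.mem_diff, Set.mem_union, Set.mem_singleton_iff,
        Finset.mem_coe, Set.mem_diff]
      constructor
      · rintro ⟨hv1, hv2⟩
        by_cases hvx : v = x
        · exact Or.inr hvx
        · left
          exact ⟨hv1, fun hvS => hv2 ⟨hvS, hvx⟩⟩
      · rintro (⟨hv1, hv2⟩ | hvx)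
        · exact ⟨hv1, fun h => hv2 h.1⟩
        · subst hvx
          exact ⟨hxs, fun h => h.2 rfl⟩
    refine Nat.find_min hQ (m := (S.erase x).card) ?_ ⟨S.erase x,
      (Finset.erase_subset _ _).trans hST0, by rw [hEq]; exact hc, rfl⟩
    rw [← hScard]
    exact Finset.card_erase_lt_of_mem hxS
  set D : Set W := (↑s : Set W) \ ↑S with hD
  have haD : a ∈ D := by
    rw [hD]
    refine ⟨has, fun h => ?_⟩
    rw [Finset.mem_coe] at h
    have := hST0 h
    rw [hT0] at this
    exact (Finset.ne_of_mem_erase (Finset.mem_of_mem_erase this)) rfl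
    -- a ≠ a contradiction: need a ∉ T0
  have hbD : b ∈ D := by
    rw [hD]
    refine ⟨hbs, fun h => ?_⟩
    rw [Finset.mem_coe] at h
    have := hST0 h
    rw [hT0] at this
    exact (Finset.ne_of_mem_erase this) rfl
  have hxa : ∀ x ∈ S, x ≠ a := by
    intro x hx
    intro h
    subst h
    have := hST0 hx
    rw [hT0] at this
    exact (Finset.ne_of_mem_erase (Finset.mem_of_mem_erase this)) rfl
  have hxb : ∀ x ∈ S, x ≠ b := by
    intro x hx h
    subst h
    have := hST0 hx
    rw [hT0] at this
    exact (Finset.ne_of_mem_erase this) rfl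
  have hnbr_a : ∀ x ∈ S, ∃ u, Reach H D a u ∧ H.Adj u x := by
    intro x hx
    exact exists_nbr (fun h => hxa x hx h.symm) (hSmin x hx) hsep
  have hnbr_b : ∀ x ∈ S, ∃ u, Reach H D b u ∧ H.Adj u x := by
    intro x hx
    exact exists_nbr (fun h => hxb x hx h.symm) (hSmin x hx).symm (fun h => hsep h.symm)
  have hSclique : ∀ x ∈ S, ∀ y ∈ S, x ≠ y → H.Adj x y := by
    intro x hx y hy hxy
    exact sep_clique_aux hH hsep hxy (hnbr_a x hx) (hnbr_a y hy) (hnbr_b x hx) (hnbr_b y hy)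
  have hSs : S ⊆ s := fun x hx =>
    Finset.mem_of_mem_erase (Finset.mem_of_mem_erase (hST0 hx))
  have hbS : b ∉ S := fun h => hxb b h rfl
  have haS : a ∉ S := fun h => hxa a h rfl
  obtain ⟨va, hva, hvas⟩ := side_simplicial s IH hSs hSclique haD hbs hbS hsep
  obtain ⟨vb, hvb, hvbs⟩ := side_simplicial s IH hSs hSclique hbD has haS
    (fun h => hsep h.symm)
  right
  refine ⟨va, vb, hvas, hvbs, ?_, ?_⟩
  · intro h
    exact hsep (hva.trans ((h ▸ hvb).symm))
  · intro hadj
    have : Reach H D a vb := hva.trans (Reach.single hva.mem_right hvb.mem_right hadj)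
    exact hsep (this.trans hvb.symm)

lemma exists_simplicial (hH : ∀ n : ℕ, 4 ≤ n → IsEmpty (cycleGraph n ↪g H))
    (s : Finset W) (hs : s.Nonempty) : ∃ v, SimplIn H s v := by
  rcases dirac hH s hs with hcl | ⟨v, _, h1, _⟩
  · obtain ⟨v, hv⟩ := hs
    exact ⟨v, hv, fun u hu w hw _ _ huw => hcl u hu w hw huw⟩
  · exact ⟨v, h1⟩
open scoped Classical in
/-- The size of a largest clique contained in `s`. -/
noncomputable def omga (H : SimpleGraph W) (s : Finset W) : ℕ :=
  (s.powerset.filter (fun t : Finset W => H.IsClique (t : Set W))).sup Finset.card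

lemma clique_card_le {s t : Finset W} (ht : t ⊆ s) (hc : H.IsClique (t : Set W)) :
    t.card ≤ omga H s := by
  classical
  exact Finset.le_sup (by simp [omga, Finset.mem_filter, Finset.mem_powerset, ht, hc])

lemma exists_max_clique (s : Finset W) :
    ∃ t : Finset W, t ⊆ s ∧ H.IsClique (t : Set W) ∧ t.card = omga H s := by
  classical
  have hne : (s.powerset.filter (fun t : Finset W => H.IsClique (t : Set W))).Nonempty := by
    refine ⟨∅, ?_⟩
    simp [Finset.mem_filter, Finset.mem_powerset]
  obtain ⟨t, ht, hcard⟩ := Finset.exists_mem_eq_sup _ hne Finset.card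
  rw [Finset.mem_filter, Finset.mem_powerset] at ht
  exact ⟨t, ht.1, ht.2, by rw [omga, ← hcard]⟩

lemma omga_mono {s s' : Finset W} (h : s ⊆ s') : omga H s ≤ omga H s' := by
  classical
  apply Finset.sup_le
  intro t ht
  rw [Finset.mem_filter, Finset.mem_powerset] at ht
  exact clique_card_le (ht.1.trans h) ht.2

theorem exists_coloring (hH : ∀ n : ℕ, 4 ≤ n → IsEmpty (cycleGraph n ↪g H)) :
    ∀ s : Finset W, ∃ f : W → ℕ,
      (∀ v ∈ s, f v < omga H s) ∧ (∀ u ∈ s, ∀ w ∈ s, H.Adj u w → f u ≠ f w) := by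
  classical
  intro s
  induction s using Finset.strongInduction with
  | _ s IH =>
  rcases s.eq_empty_or_nonempty with rfl | hs
  · exact ⟨fun _ => 0, by simp, by simp⟩
  obtain ⟨v, hvs, hvsimp⟩ := exists_simplicial hH s hs
  set s' := s.erase v with hs'
  obtain ⟨f, hf1, hf2⟩ := IH s' (Finset.erase_ssubset hvs)
  set nbrs := s'.filter (fun u => H.Adj v u) with hnbrs
  have hnbrs_mem : ∀ u, u ∈ nbrs ↔ (u ∈ s' ∧ H.Adj v u) := by
    intro u; rw [hnbrs, Finset.mem_filter]
  have hvnot : v ∉ nbrs := by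
    rw [hnbrs_mem]; rintro ⟨h, _⟩; exact (Finset.ne_of_mem_erase h) rfl
  have hcliq : H.IsClique ((insert v nbrs : Finset W) : Set W) := by
    intro p hp q hq hpq
    simp only [Finset.coe_insert, Set.mem_insert_iff, Finset.mem_coe] at hp hq
    rcases hp with rfl | hp <;> rcases hq with rfl | hq
    · exact absurd rfl hpq
    · exact ((hnbrs_mem q).1 hq).2
    · exact (((hnbrs_mem p).1 hp).2).symm
    · have hp' := (hnbrs_mem p).1 hp
      have hq' := (hnbrs_mem q).1 hq
      exact hvsimp p (Finset.mem_of_mem_erase hp'.1) q (Finset.mem_of_mem_erase hq'.1)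
        hp'.2 hq'.2 hpq
  have hcard : nbrs.card + 1 ≤ omga H s := by
    have hsub : insert v nbrs ⊆ s := by
      intro u hu
      rcases Finset.mem_insert.1 hu with rfl | hu
      · exact hvs
      · exact Finset.mem_of_mem_erase ((hnbrs_mem u).1 hu).1
    have := clique_card_le hsub hcliq
    rwa [Finset.card_insert_of_notMem hvnot] at this
  set colors := nbrs.image f with hcolors
  have hcolors_lt : colors.card < omga H s := by
    calc colors.card ≤ nbrs.card := Finset.card_image_le
    _ < omga H s := by omega
  obtain ⟨c, hc_range, hc_not⟩ : ∃ c ∈ Finset.range (omga H s), c ∉ colors := by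
    rw [← Finset.not_subset]
    intro hsub
    have := Finset.card_le_card hsub
    rw [Finset.card_range] at this
    omega
  refine ⟨Function.update f v c, ?_, ?_⟩
  · intro u hu
    by_cases huv : u = v
    · subst huv
      rw [Function.update_self]
      exact Finset.mem_range.1 hc_range
    · rw [Function.update_of_ne huv]
      exact lt_of_lt_of_le (hf1 u (Finset.mem_erase.2 ⟨huv, hu⟩))
        (omga_mono (Finset.erase_subset _ _))
  · intro p hp q hq hadj
    by_cases hpv : p = v <;> by_cases hqv : q = v
    · subst hpv; subst hqv; exact absurd hadj (H.loopless.irrefl _)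
    · subst hpv
      rw [Function.update_self, Function.update_of_ne hqv]
      intro heq
      apply hc_not
      rw [hcolors, Finset.mem_image]
      exact ⟨q, (hnbrs_mem q).2 ⟨Finset.mem_erase.2 ⟨hqv, hq⟩, hadj⟩, heq.symm⟩
    · subst hqv
      rw [Function.update_self, Function.update_of_ne hpv]
      intro heq
      apply hc_not
      rw [hcolors, Finset.mem_image]
      exact ⟨p, (hnbrs_mem p).2 ⟨Finset.mem_erase.2 ⟨hpv, hp⟩, hadj.symm⟩, heq⟩
    · rw [Function.update_of_ne hpv, Function.update_of_ne hqv]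
      exact hf2 p (Finset.mem_erase.2 ⟨hpv, hp⟩) q (Finset.mem_erase.2 ⟨hqv, hq⟩) hadj
lemma main_fin {W : Type u} [Fintype W] (H : SimpleGraph W)
    (hH : ∀ n : ℕ, 4 ≤ n → IsEmpty (cycleGraph n ↪g H)) :
    cardChromNum H = cardCliqueNum H := by
  classical
  set ω := omga H (Finset.univ : Finset W) with hω
  obtain ⟨f, hf1, hf2⟩ := exists_coloring hH (Finset.univ : Finset W)
  set P : Set (Set W) := Set.range (fun c : ULift.{u} (Fin ω) => {w | f w = (c.down : ℕ)}) with hP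
  have hPanti : ∀ A ∈ P, IsAnticlique H A := by
    rintro _ ⟨c, rfl⟩ u hu w hw huw hadj
    simp only [Set.mem_setOf_eq] at hu hw
    exact hf2 u (Finset.mem_univ u) w (Finset.mem_univ w) hadj (hu.trans hw.symm)
  have hPcover : ⋃₀ P = Set.univ := by
    ext w
    simp only [Set.mem_sUnion, Set.mem_univ, iff_true]
    exact ⟨{w' | f w' = f w}, ⟨⟨⟨f w, hf1 w (Finset.mem_univ w)⟩⟩, rfl⟩, rfl⟩
  have hchrom_le : cardChromNum H ≤ (ω : Cardinal) := by
    refine le_trans (csInf_le' ⟨P, hPanti, hPcover, rfl⟩) ?_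
    rw [hP]
    refine le_trans Cardinal.mk_range_le ?_
    rw [Cardinal.mk_uLift, Cardinal.mk_fin, Cardinal.lift_natCast]
  have hclique_eq : cardCliqueNum H = (ω : Cardinal) := by
    apply le_antisymm
    · apply ciSup_le'
      rintro ⟨c, hc⟩
      have hfin : c.Finite := Set.toFinite c
      show #c ≤ (ω : Cardinal)
      have h1 : #(↑hfin.toFinset : Set W) = (hfin.toFinset.card : Cardinal) :=
        Cardinal.mk_coe_finset
      rw [← hfin.coe_toFinset, h1, Nat.cast_le]
      exact clique_card_le (Finset.subset_univ _) (by rw [hfin.coe_toFinset]; exact hc)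
    · obtain ⟨t, _, hcl, hcard⟩ := exists_max_clique (H := H) (Finset.univ : Finset W)
      have hb : BddAbove (Set.range fun s : {s : Set W // H.IsClique s} => #s.1) := by
        refine ⟨#W, ?_⟩
        rintro κ ⟨i, rfl⟩
        exact Cardinal.mk_set_le _
      have h1 : #(↑t : Set W) = (t.card : Cardinal) := Cardinal.mk_coe_finset
      calc (ω : Cardinal) = #(↑t : Set W) := by rw [h1, hcard]
      _ ≤ _ := le_ciSup hb (⟨(↑t : Set W), hcl⟩ : {s : Set W // H.IsClique s})
  have hclique_le_chrom : cardCliqueNum H ≤ cardChromNum H := by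
    rw [hclique_eq]
    refine le_csInf ⟨_, P, hPanti, hPcover, rfl⟩ ?_
    rintro κ ⟨Q, hQanti, hQcover, rfl⟩
    obtain ⟨t, _, hcl, hcard⟩ := exists_max_clique (H := H) (Finset.univ : Finset W)
    have hch : ∀ v : (↑t : Set W), ∃ A, A ∈ Q ∧ (v : W) ∈ A := by
      intro v
      have hv : (v : W) ∈ ⋃₀ Q := by rw [hQcover]; trivial
      obtain ⟨A, hA, hvA⟩ := hv
      exact ⟨A, hA, hvA⟩
    choose g hg1 hg2 using hch
    have hinj : Function.Injective (fun v : (↑t : Set W) => (⟨g v, hg1 v⟩ : ↥Q)) := by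
      intro v w hvw
      by_contra hne
      have hvv : (v : W) ≠ (w : W) := fun h => hne (Subtype.ext h)
      have hadj : H.Adj v w := hcl v.2 w.2 hvv
      have hgeq : g v = g w := congrArg Subtype.val hvw
      exact hQanti (g v) (hg1 v) (hg2 v) (hgeq ▸ hg2 w) hvv hadj
    have h1 : #(↑t : Set W) = (t.card : Cardinal) := Cardinal.mk_coe_finset
    calc (ω : Cardinal) = #(↑t : Set W) := by rw [h1, hcard]
    _ ≤ #Q := Cardinal.mk_le_of_injective hinj
  exact le_antisymm (hchrom_le.trans hclique_eq.symm.le) hclique_le_chrom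

end CGP

/-- Hajnal–Surányi / Berge: chordal graphs are perfect, i.e. if `G` is chordal then
`χ(G_X) = ω(G_X)` for every finite set of vertices `X`. -/
theorem chordal_graphs_are_perfect {V : Type u} (G : SimpleGraph V) (hG : Chordal G) :
    ∀ X : Set V, X.Finite → cardChromNum (G.induce X) = cardCliqueNum (G.induce X) := by
  intro X hX
  haveI := hX.fintype
  apply CGP.main_fin
  intro n hn
  constructor
  intro e
  exact (hG n hn).false ((SimpleGraph.Embedding.induce X).comp e)
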